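/- Let Z be the set of N×N real matrices with all entries of absolute value at most 1, equipped with Lebesgue measure. Let Φ be a linear map from N×N matrices to ℝ^N and b ∈ ℝ^N a fixed vector. Assume Φ(Z) contains a cube of side length δ > 0 in ℝ^N. Then for every 0 < α' < N, ∫_Z |Φ(L) + b|^{-α'} dL ≤ C/δ^{α'}, where C depends only on N and α'. -/

import Mathlib

open MeasureTheory
open scoped ENNReal NNReal

open Set

lemma g_continuous {E : Type*} [NormedAddCommGroup E] (α' : ℝ) :
    Continuous (fun u : E => (‖u‖₊ : ℝ≥0∞) ^ (-α')) :=
  ENNReal.continuous_rpow_const.comp (ENNReal.continuous_coe.comp continuous_nnnorm)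


lemma lintegral_comp_smul_ennreal {E : Type*} [NormedAddCommGroup E] [NormedSpace ℝ E]
    [MeasurableSpace E] [BorelSpace E] [FiniteDimensional ℝ E] (μ : Measure E)
    [μ.IsAddHaarMeasure] (f : E → ℝ≥0∞) (hf : Measurable f) {R : ℝ} (hR : R ≠ 0) :
    ∫⁻ x, f (R • x) ∂μ =
      ENNReal.ofReal |(R ^ Module.finrank ℝ E)⁻¹| * ∫⁻ x, f x ∂μ := by
  have h1 : ∫⁻ x, f (R • x) ∂μ = ∫⁻ y, f y ∂(Measure.map (fun x => R • x) μ) :=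
    (lintegral_map hf (measurable_const_smul R)).symm
  rw [h1, Measure.map_addHaar_smul μ hR, lintegral_smul_measure, smul_eq_mul]


lemma ball_rpow_finite (N : ℕ) (hN : 0 < N) (α' : ℝ) (hα'0 : 0 < α') (hα'N : α' < N) :
    ∫⁻ u in Metric.ball (0 : EuclideanSpace ℝ (Fin N)) 1, (‖u‖₊ : ℝ≥0∞) ^ (-α') ∂volume < ∞ := by
  haveI : Nonempty (Fin N) := Fin.pos_iff_nonempty.mp hN
  set E := EuclideanSpace ℝ (Fin N)
  set g : E → ℝ≥0∞ := fun u => (‖u‖₊ : ℝ≥0∞) ^ (-α') with hg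
  set r : ℕ → ℝ := fun n => (2 : ℝ)⁻¹ ^ n with hr
  have hrpos : ∀ n, 0 < r n := fun n => pow_pos (by norm_num) n
  have htwo : ∀ a b : ℝ, (2:ℝ≥0∞) ^ (a + b) = 2 ^ a * 2 ^ b := fun a b =>
    ENNReal.rpow_add _ _ (by norm_num) (by norm_num)
  have hofr : ∀ k : ℕ, ENNReal.ofReal (r k) = (2:ℝ≥0∞) ^ (-(k:ℝ)) := by
    intro k
    have h2inv : ENNReal.ofReal ((2:ℝ)⁻¹) = (2 : ℝ≥0∞)⁻¹ := by
      rw [ENNReal.ofReal_inv_of_pos (by norm_num)]; norm_num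
    rw [hr]
    rw [ENNReal.ofReal_pow (by norm_num), h2inv, ← ENNReal.rpow_natCast (2⁻¹:ℝ≥0∞) k,
      ENNReal.inv_rpow, ← ENNReal.rpow_neg]
  set shell : ℕ → Set E := fun n => Metric.ball 0 (r n) \ Metric.ball 0 (r (n + 1)) with hshell
  have hcov : Metric.ball (0 : E) 1 ⊆ {0} ∪ ⋃ n, shell n := by
    intro x hx
    rcases eq_or_ne x 0 with rfl | hx0
    · exact Or.inl rfl
    right
    have hxn : 0 < ‖x‖ := norm_pos_iff.mpr hx0
    have hx1 : ‖x‖ < 1 := by simpa using hx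
    have hex : ∃ m, r m ≤ ‖x‖ := by
      obtain ⟨m, hm⟩ := exists_pow_lt_of_lt_one hxn (by norm_num : (2:ℝ)⁻¹ < 1)
      exact ⟨m, hm.le⟩
    classical
    have hm : r (Nat.find hex) ≤ ‖x‖ := Nat.find_spec hex
    have hm0 : Nat.find hex ≠ 0 := by
      intro h
      rw [h] at hm
      simp [hr] at hm
      linarith
    have hsucc : Nat.find hex - 1 + 1 = Nat.find hex :=
      Nat.succ_pred_eq_of_pos (Nat.pos_of_ne_zero hm0)
    have hlt : ¬ (r (Nat.find hex - 1) ≤ ‖x‖) := Nat.find_min hex (by omega)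
    refine mem_iUnion.mpr ⟨Nat.find hex - 1, ?_, ?_⟩
    · simpa [Metric.mem_ball] using lt_of_not_ge hlt
    · rw [hsucc]
      simpa [Metric.mem_ball, not_lt] using hm
  calc ∫⁻ u in Metric.ball (0 : E) 1, g u ∂volume
      ≤ ∫⁻ u in ({0} ∪ ⋃ n, shell n : Set E), g u ∂volume := lintegral_mono_set hcov
    _ ≤ (∫⁻ u in ({0} : Set E), g u ∂volume) + ∫⁻ u in ⋃ n, shell n, g u ∂volume :=
        lintegral_union_le _ _ _
    _ ≤ 0 + ∑' n, ∫⁻ u in shell n, g u ∂volume := by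
        gcongr
        · have : volume ({0} : Set E) = 0 := measure_singleton 0
          rw [setLIntegral_measure_zero _ _ this]
        · exact lintegral_iUnion_le _ _
    _ < ∞ := by
        rw [zero_add]
        set volB := volume (Metric.ball (0:E) 1) with hvolB
        have hterm : ∀ n : ℕ, ∫⁻ u in shell n, g u ∂volume ≤
            ((2:ℝ≥0∞) ^ α' * volB) * ((2:ℝ≥0∞) ^ (α' - (N:ℝ))) ^ n := by
          intro n
          have hb : ∀ u ∈ shell n, g u ≤ (2:ℝ≥0∞) ^ (((n:ℝ)+1) * α') := by
            intro u hu
            have h1 : r (n+1) ≤ ‖u‖ := by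
              have := hu.2
              simpa [Metric.mem_ball, not_lt] using this
            have h2 : (ENNReal.ofReal (r (n+1))) ≤ (‖u‖₊ : ℝ≥0∞) := by
              rw [← enorm_eq_nnnorm, ← ofReal_norm]
              exact ENNReal.ofReal_le_ofReal h1
            have h3 : g u ≤ (ENNReal.ofReal (r (n+1))) ^ (-α') := by
              simp only [hg, ENNReal.rpow_neg]
              exact ENNReal.inv_le_inv.mpr (ENNReal.rpow_le_rpow h2 hα'0.le)
            refine h3.trans_eq ?_
            rw [hofr (n+1), ← ENNReal.rpow_mul]
            congr 1
            push_cast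
            ring
          calc ∫⁻ u in shell n, g u ∂volume
              ≤ ∫⁻ _ in shell n, (2:ℝ≥0∞) ^ (((n:ℝ)+1) * α') ∂volume :=
                setLIntegral_mono' (measurableSet_ball.diff measurableSet_ball) hb
            _ = (2:ℝ≥0∞) ^ (((n:ℝ)+1) * α') * volume (shell n) := setLIntegral_const _ _
            _ ≤ (2:ℝ≥0∞) ^ (((n:ℝ)+1) * α') * volume (Metric.ball (0:E) (r n)) := by
                gcongr
                exact diff_subset
            _ ≤ _ := by
                rw [Measure.addHaar_ball volume (0:E) (hrpos n).le, finrank_euclideanSpace_fin]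
                have hrn : ENNReal.ofReal (r n ^ N) = (2:ℝ≥0∞) ^ (-((n*N : ℕ):ℝ)) := by
                  rw [hr]
                  rw [show ((2:ℝ)⁻¹ ^ n) ^ N = (2:ℝ)⁻¹ ^ (n * N) from (pow_mul _ n N).symm]
                  exact hofr (n * N)
                rw [hrn, ← hvolB]
                refine le_of_eq ?_
                rw [← ENNReal.rpow_natCast ((2:ℝ≥0∞) ^ (α' - (N:ℝ))) n, ← ENNReal.rpow_mul]
                calc (2:ℝ≥0∞) ^ (((n:ℝ)+1) * α') * ((2:ℝ≥0∞) ^ (-((n*N : ℕ):ℝ)) * volB)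
                    = (2:ℝ≥0∞) ^ (((n:ℝ)+1) * α' + (-((n*N : ℕ):ℝ))) * volB := by
                      rw [htwo]; ring
                  _ = (2:ℝ≥0∞) ^ (α' + (α' - (N:ℝ)) * n) * volB := by
                      congr 2
                      push_cast
                      ring
                  _ = (2:ℝ≥0∞) ^ α' * volB * (2:ℝ≥0∞) ^ ((α' - (N:ℝ)) * n) := by
                      rw [htwo]; ring
        have hsum : ∑' n, ∫⁻ u in shell n, g u ∂volume ≤
            ((2:ℝ≥0∞) ^ α' * volB) * ∑' n : ℕ, ((2:ℝ≥0∞) ^ (α' - (N:ℝ))) ^ n := by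
          exact (ENNReal.tsum_le_tsum hterm).trans_eq ENNReal.tsum_mul_left
        refine lt_of_le_of_lt hsum ?_
        have hρ : (2:ℝ≥0∞) ^ (α' - (N:ℝ)) < 1 :=
          ENNReal.rpow_lt_one_of_one_lt_of_neg (by norm_num) (by linarith)
        rw [ENNReal.tsum_geometric]
        refine ENNReal.mul_lt_top (ENNReal.mul_lt_top ?_ measure_ball_lt_top) ?_
        · exact ENNReal.rpow_lt_top_of_nonneg hα'0.le (by norm_num)
        · simp only [ENNReal.inv_lt_top]
          exact tsub_pos_of_lt hρ

lemma ball_scaled (N : ℕ) (hN : 0 < N) (α' : ℝ) (hα'0 : 0 < α') (δ : ℝ) (hδ : 0 < δ) :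
    ∫⁻ u in Metric.ball (0 : EuclideanSpace ℝ (Fin N)) δ, (‖u‖₊ : ℝ≥0∞) ^ (-α') ∂volume ≤
      (ENNReal.ofReal δ) ^ ((N:ℝ) - α') *
        ∫⁻ u in Metric.ball (0 : EuclideanSpace ℝ (Fin N)) 1, (‖u‖₊ : ℝ≥0∞) ^ (-α') ∂volume := by
  haveI : Nonempty (Fin N) := Fin.pos_iff_nonempty.mp hN
  set E := EuclideanSpace ℝ (Fin N)
  set g : E → ℝ≥0∞ := fun u => (‖u‖₊ : ℝ≥0∞) ^ (-α') with hg
  have hmg : Measurable g := (g_continuous α').measurable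
  set c₀ := ∫⁻ u in Metric.ball (0:E) 1, g u ∂volume with hc₀
  set f : E → ℝ≥0∞ := (Metric.ball (0:E) δ).indicator g with hf
  have hmf : Measurable f := hmg.indicator measurableSet_ball
  have hδN : (0:ℝ) < δ ^ N := pow_pos hδ N
  have hmap := lintegral_comp_smul_ennreal volume f hmf hδ.ne'
  rw [finrank_euclideanSpace_fin] at hmap
  have hsmul : ∀ x : E, (‖δ • x‖₊ : ℝ≥0∞) = ENNReal.ofReal δ * (‖x‖₊ : ℝ≥0∞) := by
    intro x
    rw [nnnorm_smul, ENNReal.coe_mul]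
    congr 1
    rw [← Real.enorm_eq_ofReal hδ.le, enorm_eq_nnnorm]
  have hptw : ∀ x : E, f (δ • x) = (Metric.ball (0:E) 1).indicator
      (fun x => (ENNReal.ofReal δ) ^ (-α') * g x) x := by
    intro x
    have hmem : δ • x ∈ Metric.ball (0:E) δ ↔ x ∈ Metric.ball (0:E) 1 := by
      rw [Metric.mem_ball, Metric.mem_ball, dist_zero_right, dist_zero_right, norm_smul,
        Real.norm_eq_abs, abs_of_pos hδ]
      constructor
      · intro h; nlinarith [norm_nonneg x]
      · intro h; nlinarith [norm_nonneg x]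
    by_cases hx : x ∈ Metric.ball (0:E) 1
    · rw [hf, indicator_of_mem (hmem.mpr hx), indicator_of_mem hx]
      rw [hg]
      simp only
      rw [hsmul x, ENNReal.mul_rpow_of_ne_top ENNReal.ofReal_ne_top ENNReal.coe_ne_top]
    · rw [hf, indicator_of_notMem (fun h => hx (hmem.mp h)), indicator_of_notMem hx]
  calc ∫⁻ u in Metric.ball (0:E) δ, g u ∂volume
      = ∫⁻ u, f u ∂volume := (lintegral_indicator measurableSet_ball g).symm
    _ = ENNReal.ofReal (δ ^ N) * ∫⁻ x, f (δ • x) ∂volume := by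
        rw [hmap, ← mul_assoc]
        rw [abs_of_pos (inv_pos.mpr hδN), ENNReal.ofReal_inv_of_pos hδN,
          ENNReal.mul_inv_cancel (by simp [ENNReal.ofReal_pos, hδN]) ENNReal.ofReal_ne_top,
          one_mul]
    _ = ENNReal.ofReal (δ ^ N) * ((ENNReal.ofReal δ) ^ (-α') * c₀) := by
        congr 1
        simp_rw [hptw]
        rw [lintegral_indicator measurableSet_ball, hc₀,
          lintegral_const_mul _ hmg]
    _ ≤ (ENNReal.ofReal δ) ^ ((N:ℝ) - α') * c₀ := by
        rw [ENNReal.ofReal_pow hδ.le, ← ENNReal.rpow_natCast _ N, ← mul_assoc,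
          ← ENNReal.rpow_add _ _ (by simp [ENNReal.ofReal_pos, hδ]) ENNReal.ofReal_ne_top]
        exact le_of_eq (by ring_nf)

lemma key_lemma (N : ℕ) (hN : 0 < N) (α' : ℝ) (hα'0 : 0 < α') (hα'N : α' < N) :
    ∃ K : ℝ≥0∞, K ≠ ∞ ∧ ∀ (y : EuclideanSpace ℝ (Fin N)) (δ : ℝ), 0 < δ →
      ∫⁻ t in Set.univ.pi (fun _ : Fin N => Icc (0:ℝ) 1),
        (‖y + (δ/2) • (((MeasurableEquiv.toLp 2 (Fin N → ℝ)).symm).symm t)‖₊ : ℝ≥0∞) ^ (-α')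
          ∂volume
        ≤ K * (ENNReal.ofReal δ) ^ (-α') := by
  haveI : Nonempty (Fin N) := Fin.pos_iff_nonempty.mp hN
  set E := EuclideanSpace ℝ (Fin N)
  set g : E → ℝ≥0∞ := fun u => (‖u‖₊ : ℝ≥0∞) ^ (-α') with hg
  have hmg : Measurable g := (g_continuous α').measurable
  set c₀ := ∫⁻ u in Metric.ball (0:E) 1, g u ∂volume with hc₀
  refine ⟨(2:ℝ≥0∞) ^ (N:ℕ) * c₀ + 1, ?_, ?_⟩
  · have h1 : c₀ < ∞ := ball_rpow_finite N hN α' hα'0 hα'N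
    have : (2:ℝ≥0∞) ^ (N:ℕ) * c₀ < ∞ :=
      ENNReal.mul_lt_top (by simp [ENNReal.pow_lt_top, ENNReal.ofNat_lt_top]) h1
    simp [this.ne]
  intro y δ hδ
  set q : ℝ := δ / 2 with hq
  have hqpos : 0 < q := by positivity
  set D := ENNReal.ofReal δ with hD
  have hD0 : D ≠ 0 := by simp [hD, hδ]
  have hDtop : D ≠ ∞ := ENNReal.ofReal_ne_top
  set φ := (MeasurableEquiv.toLp 2 (Fin N → ℝ)).symm with hφ
  set box : Set (Fin N → ℝ) := Set.univ.pi (fun _ : Fin N => Icc (0:ℝ) 1) with hbox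
  have hboxm : MeasurableSet box := MeasurableSet.univ_pi fun i => measurableSet_Icc
  set boxE : Set E := φ ⁻¹' box with hboxE
  have hboxEm : MeasurableSet boxE := φ.measurable hboxm
  set F : E → ℝ≥0∞ := fun v => g (y + q • v) with hF
  -- step 1 : transfer to E
  have step1 : ∫⁻ t in box, F (φ.symm t) ∂volume = ∫⁻ v in boxE, F v ∂volume := by
    have hmp := (EuclideanSpace.volume_preserving_symm_measurableEquiv_toLp (Fin N)).symm
    have hemb : MeasurableEmbedding (φ.symm) := φ.symm.measurableEmbedding
    have hpre : box = φ.symm ⁻¹' boxE := by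
      rw [hboxE, ← Set.preimage_comp]
      simp
    rw [hpre]
    exact hmp.setLIntegral_comp_preimage_emb hemb F boxE
  -- volume of boxE is 1
  have hvol : volume boxE = 1 := by
    rw [hboxE, (EuclideanSpace.volume_preserving_symm_measurableEquiv_toLp (Fin N)).measure_preimage
      hboxm.nullMeasurableSet]
    rw [hbox, volume_pi_pi]
    simp [Real.volume_Icc]
  -- pointwise bound
  set Fb : E → ℝ≥0∞ := (Metric.ball (0:E) δ).indicator g with hFb
  have hmFb : Measurable Fb := hmg.indicator measurableSet_ball
  have haff : Measurable fun v : E => y + q • v :=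
    (measurable_id.const_smul q).const_add y
  have hb : ∀ v, boxE.indicator F v ≤
      Fb (y + q • v) + boxE.indicator (fun _ => D ^ (-α')) v := by
    intro v
    by_cases hv : v ∈ boxE
    · rw [indicator_of_mem hv, indicator_of_mem hv]
      by_cases hball : y + q • v ∈ Metric.ball (0:E) δ
      · rw [hFb, indicator_of_mem hball]
        exact le_self_add
      · rw [hFb, indicator_of_notMem hball, zero_add]
        have hnorm : δ ≤ ‖y + q • v‖ := by
          rw [Metric.mem_ball, dist_zero_right, not_lt] at hball
          exact hball
        have h2 : D ≤ (‖y + q • v‖₊ : ℝ≥0∞) := by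
          rw [← enorm_eq_nnnorm, ← ofReal_norm, hD]
          exact ENNReal.ofReal_le_ofReal hnorm
        rw [hF, hg]
        simp only
        rw [ENNReal.rpow_neg, ENNReal.rpow_neg]
        exact ENNReal.inv_le_inv.mpr (ENNReal.rpow_le_rpow h2 hα'0.le)
    · rw [indicator_of_notMem hv, indicator_of_notMem hv]
      exact zero_le
  -- integral of second piece
  have hI2 : ∫⁻ v, boxE.indicator (fun _ => D ^ (-α')) v ∂volume = D ^ (-α') := by
    rw [lintegral_indicator hboxEm, setLIntegral_const, hvol, mul_one]
  -- integral of first piece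
  have hI1 : ∫⁻ v, Fb (y + q • v) ∂volume ≤
      ((2:ℝ≥0∞) ^ (N:ℕ) * c₀) * D ^ (-α') := by
    have hcomp : (fun v : E => Fb (y + q • v)) = fun v => (fun x => Fb (y + x)) (q • v) := rfl
    have hmFb2 : Measurable fun x : E => Fb (y + x) := hmFb.comp (measurable_id.const_add y)
    rw [hcomp, lintegral_comp_smul_ennreal volume _ hmFb2 hqpos.ne',
      finrank_euclideanSpace_fin]
    have htrans : ∫⁻ x, Fb (y + x) ∂volume = ∫⁻ x, Fb x ∂volume :=
      lintegral_add_left_eq_self Fb y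
    rw [htrans, hFb, lintegral_indicator measurableSet_ball]
    have hball := ball_scaled N hN α' hα'0 δ hδ
    rw [← hc₀, ← hg, ← hD] at hball
    calc ENNReal.ofReal |(q ^ N)⁻¹| * ∫⁻ u in Metric.ball (0:E) δ, g u ∂volume
        ≤ ENNReal.ofReal |(q ^ N)⁻¹| * (D ^ ((N:ℝ) - α') * c₀) := by gcongr
      _ = ((2:ℝ≥0∞) ^ (N:ℕ) * c₀) * D ^ (-α') := by
          have hA : ENNReal.ofReal |(q ^ N)⁻¹| = (2:ℝ≥0∞) ^ (N:ℕ) * D ^ (-(N:ℝ)) := by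
            have hqN : (0:ℝ) < q ^ N := pow_pos hqpos N
            rw [abs_of_pos (inv_pos.mpr hqN), ENNReal.ofReal_inv_of_pos hqN,
              ENNReal.ofReal_pow hqpos.le]
            have hq2 : ENNReal.ofReal q = D * 2⁻¹ := by
              rw [hq, ENNReal.ofReal_div_of_pos (by norm_num), hD]
              norm_num [div_eq_mul_inv]
            rw [hq2, mul_pow, ENNReal.mul_inv (Or.inl (by positivity))
              (Or.inl (ENNReal.pow_ne_top hDtop)), ← ENNReal.inv_pow, inv_inv,
              ← ENNReal.rpow_natCast D N, ← ENNReal.rpow_neg]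
            ring
          rw [hA]
          have hDD : D ^ (-(N:ℝ)) * D ^ ((N:ℝ) - α') = D ^ (-α') := by
            rw [← ENNReal.rpow_add _ _ hD0 hDtop]
            ring_nf
          calc (2:ℝ≥0∞) ^ (N:ℕ) * D ^ (-(N:ℝ)) * (D ^ ((N:ℝ) - α') * c₀)
              = (2:ℝ≥0∞) ^ (N:ℕ) * (D ^ (-(N:ℝ)) * D ^ ((N:ℝ) - α')) * c₀ := by ring
            _ = ((2:ℝ≥0∞) ^ (N:ℕ) * c₀) * D ^ (-α') := by rw [hDD]; ring
  -- final assembly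
  calc ∫⁻ t in box, (fun v => g (y + q • v)) (φ.symm t) ∂volume
      = ∫⁻ v in boxE, F v ∂volume := step1
    _ = ∫⁻ v, boxE.indicator F v ∂volume := (lintegral_indicator hboxEm F).symm
    _ ≤ ∫⁻ v, (Fb (y + q • v) + boxE.indicator (fun _ => D ^ (-α')) v) ∂volume :=
        lintegral_mono hb
    _ = (∫⁻ v, Fb (y + q • v) ∂volume) + ∫⁻ v, boxE.indicator (fun _ => D ^ (-α')) v ∂volume :=
        lintegral_add_left (hmFb.comp haff) _
    _ ≤ ((2:ℝ≥0∞) ^ (N:ℕ) * c₀) * D ^ (-α') + D ^ (-α') := by rw [hI2]; gcongr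
    _ = ((2:ℝ≥0∞) ^ (N:ℕ) * c₀ + 1) * D ^ (-α') := by ring

/-- Hunt–Kaloshin / Sauer–Yorke integral estimate: if `Φ` is a linear map from `N×N`
matrices to `ℝ^N`, `b ∈ ℝ^N`, and `Φ(Z)` contains an axis-parallel cube of side `δ`,
where `Z` is the cube of matrices with entries in `[−1,1]`, then for `0 < α' < N`,
`∫_Z |Φ(L)+b|^{-α'} dL ≤ C/δ^{α'}` with `C = C(N, α')`. -/
theorem matrix_cube_integral_estimate (N : ℕ) (hN : 0 < N) (α' : ℝ)
    (hα'0 : 0 < α') (hα'N : α' < N) :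
    ∃ C : ℝ, 0 < C ∧
      ∀ (Φ : (Fin N → Fin N → ℝ) →ₗ[ℝ] EuclideanSpace ℝ (Fin N))
        (b : EuclideanSpace ℝ (Fin N)) (δ : ℝ), 0 < δ →
        (∃ c : EuclideanSpace ℝ (Fin N),
          WithLp.ofLp ⁻¹' (Set.univ.pi fun i => Set.Icc (c i) (c i + δ)) ⊆
            Φ '' {L : Fin N → Fin N → ℝ | ∀ i j, |L i j| ≤ 1}) →
        ∫⁻ L in {L : Fin N → Fin N → ℝ | ∀ i j, |L i j| ≤ 1},
            (‖Φ L + b‖₊ : ℝ≥0∞) ^ (-α') ∂volume ≤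
          ENNReal.ofReal (C / δ ^ α') := by
  classical
  obtain ⟨K₁, hK₁top, hkey⟩ := key_lemma N hN α' hα'0 hα'N
  set Z' : Set (Fin N → Fin N → ℝ) :=
    Set.univ.pi fun _ => Set.univ.pi fun _ => Icc (-(N+1:ℝ)) (N+1) with hZ'
  have hZ'm : MeasurableSet Z' :=
    MeasurableSet.univ_pi fun i => MeasurableSet.univ_pi fun j => measurableSet_Icc
  have hZ'vol : volume Z' < ∞ := by
    rw [hZ', volume_pi_pi]
    refine ENNReal.prod_lt_top fun i _ => ?_
    rw [volume_pi_pi]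
    exact ENNReal.prod_lt_top fun j _ => by simp [Real.volume_Icc]
  set C : ℝ := (volume Z' * K₁).toReal + 1 with hC
  have hVK : volume Z' * K₁ ≠ ∞ := ENNReal.mul_ne_top hZ'vol.ne hK₁top
  refine ⟨C, by positivity, ?_⟩
  rintro Φ b δ hδ ⟨c, hc⟩
  set Zset : Set (Fin N → Fin N → ℝ) := {L | ∀ i j, |L i j| ≤ 1} with hZset
  have hZeq : Zset = Set.univ.pi fun _ => Set.univ.pi fun _ => Icc (-1:ℝ) 1 := by
    ext L
    simp [hZset, abs_le, Set.pi_univ_Icc, Pi.le_def, forall_and]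
  have hZm : MeasurableSet Zset := by
    rw [hZeq]
    exact MeasurableSet.univ_pi fun i => MeasurableSet.univ_pi fun j => measurableSet_Icc
  set hfun : (Fin N → Fin N → ℝ) → ℝ≥0∞ := fun L => (‖Φ L + b‖₊ : ℝ≥0∞) ^ (-α') with hhfun
  have hΦcont : Continuous Φ := Φ.continuous_of_finiteDimensional
  have hmh : Measurable hfun :=
    ((g_continuous α').comp (hΦcont.add continuous_const)).measurable
  -- construct the matrices A k
  have hcmem : (c : Fin N → ℝ) ∈ (Set.univ.pi fun i => Set.Icc (c i) (c i + δ)) := by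
    intro i _
    exact ⟨le_rfl, by linarith⟩
  obtain ⟨L₀, hL₀Z, hL₀⟩ := hc hcmem
  have hpk : ∀ k : Fin N, (fun i => c i + if i = k then δ else 0) ∈
      (Set.univ.pi fun i => Set.Icc (c i) (c i + δ)) := by
    intro k i _
    show c i + (if i = k then δ else 0) ∈ Icc (c i) (c i + δ)
    by_cases h : i = k
    · rw [if_pos h]
      exact Set.mem_Icc.mpr ⟨by linarith, le_rfl⟩
    · rw [if_neg h, add_zero]
      exact Set.mem_Icc.mpr ⟨le_rfl, by linarith⟩
  have hLk : ∀ k : Fin N, ∃ L, L ∈ Zset ∧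
      (Φ L : Fin N → ℝ) = fun i => c i + if i = k then δ else 0 := by
    intro k
    obtain ⟨L, hLZ, hLeq⟩ := hc (a := WithLp.toLp 2 (fun i => c i + if i = k then δ else 0)) (hpk k)
    exact ⟨L, hLZ, by rw [hLeq]⟩
  choose L hLZ hLeq using hLk
  set A : Fin N → (Fin N → Fin N → ℝ) := fun k => (2:ℝ)⁻¹ • (L k - L₀) with hA
  have hAZ : ∀ k i j, |A k i j| ≤ 1 := by
    intro k i j
    have h1 := hLZ k i j
    have h2 := hL₀Z i j
    simp only [hA, Pi.smul_apply, Pi.sub_apply, smul_eq_mul]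
    rw [abs_mul, abs_inv]
    have := abs_sub_abs_le_abs_sub (L k i j) (L₀ i j)
    have habs : |L k i j - L₀ i j| ≤ 2 := by
      have := abs_sub (L k i j) (L₀ i j)
      calc |L k i j - L₀ i j| ≤ |L k i j| + |L₀ i j| := abs_sub _ _
        _ ≤ 2 := by linarith
    rw [abs_two]
    linarith [habs]
  have hΦA : ∀ k, (Φ (A k) : Fin N → ℝ) = fun i => if i = k then δ/2 else 0 := by
    intro k
    have : Φ (A k) = (2:ℝ)⁻¹ • (Φ (L k) - Φ L₀) := by
      rw [hA, _root_.map_smul, map_sub]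
    funext i
    rw [this]
    have h1 : (Φ (L k)) i = c i + if i = k then δ else 0 := by rw [hLeq k]
    have h2 : (Φ L₀) i = c i := by rw [hL₀]
    have : ((2:ℝ)⁻¹ • (Φ (L k) - Φ L₀)) i = (2:ℝ)⁻¹ * ((Φ (L k)) i - (Φ L₀) i) := rfl
    rw [this, h1, h2]
    by_cases h : i = k <;> simp [h] <;> ring
  set T : (Fin N → ℝ) → (Fin N → Fin N → ℝ) := fun t => ∑ k, t k • A k with hT
  have hTcont : Continuous T := by
    apply continuous_finset_sum
    intro k _
    exact (continuous_apply k).smul continuous_const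
  have hTapp : ∀ t i j, T t i j = ∑ k, t k * A k i j := by
    intro t i j
    rw [hT]
    simp only [Finset.sum_apply, Pi.smul_apply, smul_eq_mul]
  set box : Set (Fin N → ℝ) := Set.univ.pi (fun _ : Fin N => Icc (0:ℝ) 1) with hbox
  have hboxm : MeasurableSet box := MeasurableSet.univ_pi fun i => measurableSet_Icc
  have hboxvol : volume box = 1 := by
    rw [hbox, volume_pi_pi]
    simp [Real.volume_Icc]
  have hΦT : ∀ t, Φ (T t) = (δ/2) • (((MeasurableEquiv.toLp 2 (Fin N → ℝ)).symm).symm t) := by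
    intro t
    have h1 : Φ (T t) = ∑ k, t k • Φ (A k) := by
      rw [hT, map_sum]
      simp_rw [_root_.map_smul]
    ext i
    rw [h1]
    have h2 : (∑ k, t k • Φ (A k)) i = ∑ k, t k * (Φ (A k) : Fin N → ℝ) i := by
      have h2a : (∑ k, t k • Φ (A k)) i
          = EuclideanSpace.projₗ (𝕜 := ℝ) i (∑ k, t k • Φ (A k)) := rfl
      rw [h2a, map_sum]
      apply Finset.sum_congr rfl
      intro k _
      have : EuclideanSpace.projₗ (𝕜 := ℝ) i (t k • Φ (A k)) = t k • (Φ (A k)) i :=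
        (EuclideanSpace.projₗ (𝕜 := ℝ) i).map_smul (t k) (Φ (A k))
      rw [this, smul_eq_mul]
    rw [h2]
    have h3 : ∀ k, (Φ (A k) : Fin N → ℝ) i = if i = k then δ/2 else 0 := by
      intro k; rw [hΦA k]
    simp_rw [h3, mul_ite, mul_zero]
    rw [Finset.sum_ite_eq (Finset.univ) i (fun k => t k * (δ/2))]
    simp only [Finset.mem_univ, if_true]
    have h4 : ((δ/2) • (((MeasurableEquiv.toLp 2 (Fin N → ℝ)).symm).symm t)) i
        = (δ/2) * t i := rfl
    rw [h4]
    ring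
  have hTbound : ∀ t ∈ box, ∀ i j, |T t i j| ≤ N := by
    intro t ht i j
    rw [hTapp]
    calc |∑ k, t k * A k i j| ≤ ∑ k, |t k * A k i j| := Finset.abs_sum_le_sum_abs _ _
      _ ≤ ∑ _k : Fin N, 1 := by
          apply Finset.sum_le_sum
          intro k _
          rw [abs_mul]
          have ht1 : t k ∈ Icc (0:ℝ) 1 := ht k (Set.mem_univ k)
          have : |t k| ≤ 1 := abs_le.mpr ⟨by linarith [ht1.1], ht1.2⟩
          calc |t k| * |A k i j| ≤ 1 * 1 := by
                apply mul_le_mul this (hAZ k i j) (abs_nonneg _) zero_le_one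
            _ = 1 := mul_one 1
      _ = N := by simp
  -- main translation estimate
  have main : ∀ t ∈ box, ∫⁻ L' in Zset, hfun L' ∂volume ≤ ∫⁻ L' in Z', hfun (L' + T t) ∂volume := by
    intro t ht
    have h1 : ∫⁻ L' in Zset, hfun L' ∂volume = ∫⁻ L', Zset.indicator hfun L' ∂volume :=
      (lintegral_indicator hZm hfun).symm
    have h2 : ∫⁻ L', Zset.indicator hfun (L' + T t) ∂volume
        = ∫⁻ L', Zset.indicator hfun L' ∂volume :=
      lintegral_add_right_eq_self (Zset.indicator hfun) (T t)
    rw [h1, ← h2]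
    have h3 : ∀ L', Zset.indicator hfun (L' + T t) ≤
        Z'.indicator (fun L'' => hfun (L'' + T t)) L' := by
      intro L'
      by_cases hL : L' + T t ∈ Zset
      · have hmem : L' ∈ Z' := by
          intro i _
          intro j _
          have h5 := hL i j
          have h6 := hTbound t ht i j
          have h7 : L' i j = (L' + T t) i j - T t i j := by simp
          rw [mem_Icc]
          have h8 : |L' i j| ≤ 1 + N := by
            rw [h7]
            calc |(L' + T t) i j - T t i j| ≤ |(L' + T t) i j| + |T t i j| := abs_sub _ _
              _ ≤ 1 + N := add_le_add h5 h6
          constructor <;> [linarith [abs_le.mp h8 |>.1]; linarith [abs_le.mp h8 |>.2]]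
        rw [indicator_of_mem hL, indicator_of_mem hmem]
      · rw [indicator_of_notMem hL]
        exact zero_le
    calc ∫⁻ L', Zset.indicator hfun (L' + T t) ∂volume
        ≤ ∫⁻ L', Z'.indicator (fun L'' => hfun (L'' + T t)) L' ∂volume := lintegral_mono h3
      _ = ∫⁻ L' in Z', hfun (L' + T t) ∂volume := lintegral_indicator hZ'm _
  -- chain
  have hswap : ∫⁻ t in box, ∫⁻ L' in Z', hfun (L' + T t) ∂volume ∂volume
      = ∫⁻ L' in Z', ∫⁻ t in box, hfun (L' + T t) ∂volume ∂volume := by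
    apply lintegral_lintegral_swap
    apply Measurable.aemeasurable
    exact hmh.comp (measurable_snd.add (hTcont.measurable.comp measurable_fst))
  have hinner : ∀ L', ∫⁻ t in box, hfun (L' + T t) ∂volume ≤ K₁ * (ENNReal.ofReal δ) ^ (-α') := by
    intro L'
    have heq : ∀ t, hfun (L' + T t) =
        (‖(Φ L' + b) + (δ/2) • (((MeasurableEquiv.toLp 2 (Fin N → ℝ)).symm).symm t)‖₊ : ℝ≥0∞)
          ^ (-α') := by
      intro t
      rw [hhfun]
      simp only
      rw [map_add, hΦT t, add_right_comm]
    calc ∫⁻ t in box, hfun (L' + T t) ∂volume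
        = ∫⁻ t in box, (‖(Φ L' + b) + (δ/2) •
            (((MeasurableEquiv.toLp 2 (Fin N → ℝ)).symm).symm t)‖₊ : ℝ≥0∞) ^ (-α') ∂volume := by
          exact lintegral_congr fun t => heq t
      _ ≤ K₁ * (ENNReal.ofReal δ) ^ (-α') := hkey (Φ L' + b) δ hδ
  calc ∫⁻ L' in Zset, hfun L' ∂volume
      = ∫⁻ _t in box, (∫⁻ L' in Zset, hfun L' ∂volume) ∂volume := by
        rw [setLIntegral_const, hboxvol, mul_one]
    _ ≤ ∫⁻ t in box, ∫⁻ L' in Z', hfun (L' + T t) ∂volume ∂volume :=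
        setLIntegral_mono' hboxm main
    _ = ∫⁻ L' in Z', ∫⁻ t in box, hfun (L' + T t) ∂volume ∂volume := hswap
    _ ≤ ∫⁻ _L' in Z', K₁ * (ENNReal.ofReal δ) ^ (-α') ∂volume :=
        setLIntegral_mono' hZ'm fun L' _ => hinner L'
    _ = volume Z' * K₁ * (ENNReal.ofReal δ) ^ (-α') := by
        rw [setLIntegral_const]
        ring
    _ ≤ ENNReal.ofReal (C / δ ^ α') := by
        have hδα : (0:ℝ) < δ ^ α' := Real.rpow_pos_of_pos hδ α'
        rw [ENNReal.ofReal_div_of_pos hδα, ENNReal.div_eq_inv_mul]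
        have h9 : (ENNReal.ofReal δ) ^ (-α') = (ENNReal.ofReal (δ ^ α'))⁻¹ := by
          rw [ENNReal.rpow_neg, ENNReal.ofReal_rpow_of_pos hδ]
        rw [h9, mul_comm (ENNReal.ofReal (δ ^ α'))⁻¹ (ENNReal.ofReal C)]
        gcongr
        calc volume Z' * K₁ = ENNReal.ofReal ((volume Z' * K₁).toReal) := by
              rw [ENNReal.ofReal_toReal hVK]
          _ ≤ ENNReal.ofReal C := by
              apply ENNReal.ofReal_le_ofReal
              rw [hC]
              linarith [ENNReal.toReal_nonneg (a := volume Z' * K₁)]
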